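/- The explicit 7×7 circulant matrix A whose first row is (163, 108, 27, 4, 4, 27, 108) (and whose i-th row is the cyclic shift of the first row by i−1 positions) satisfies A = BBᵀ, where B is the entrywise nonnegative 7×14 matrix whose rows are: row 1: (√27, 51/√27, √27, 0, 0, 0, 0, √(2/3), 0, 0, √6, √6, 0, 0); row 2: (0, √27, 51/√27, √27, 0, 0, 0, 0, √(2/3), 0, 0, √6, √6, 0); row 3: (0, 0, √27, 51/√27, √27, 0, 0, 0, 0, √(2/3), 0, 0, √6, √6); row 4: (0, 0, 0, √27, 51/√27, √27, 0, √6, 0, 0, √(2/3), 0, 0, √6); row 5: (0, 0, 0, 0, √27, 51/√27, √27, √6, √6, 0, 0, √(2/3), 0, 0); row 6: (√27, 0, 0, 0, 0, √27, 51/√27, 0, √6, √6, 0, 0, √(2/3), 0); row 7: (51/√27, √27, 0, 0, 0, 0, √27, 0, 0, √6, √6, 0, 0, √(2/3)). In particular, A is completely positive with cp-rank at most 14. -/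
import Mathlib


open Matrix Real

/-- The first row `(163, 108, 27, 4, 4, 27, 108)`. -/
def firstRow : Fin 7 → ℝ := ![163, 108, 27, 4, 4, 27, 108]

/-- The circulant matrix whose `i`-th row is the cyclic shift of the first row by `i` positions,
i.e. `A i j = firstRow (j - i)`. -/
def Acirc : Matrix (Fin 7) (Fin 7) ℝ := Matrix.of fun i j => firstRow (j - i)

/-- The explicit nonnegative 7×14 factor matrix. -/
noncomputable def Bfac : Matrix (Fin 7) (Fin 14) ℝ :=
  !![Real.sqrt 27, 51 / Real.sqrt 27, Real.sqrt 27, 0, 0, 0, 0,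
       Real.sqrt (2/3), 0, 0, Real.sqrt 6, Real.sqrt 6, 0, 0;
     0, Real.sqrt 27, 51 / Real.sqrt 27, Real.sqrt 27, 0, 0, 0,
       0, Real.sqrt (2/3), 0, 0, Real.sqrt 6, Real.sqrt 6, 0;
     0, 0, Real.sqrt 27, 51 / Real.sqrt 27, Real.sqrt 27, 0, 0,
       0, 0, Real.sqrt (2/3), 0, 0, Real.sqrt 6, Real.sqrt 6;
     0, 0, 0, Real.sqrt 27, 51 / Real.sqrt 27, Real.sqrt 27, 0,
       Real.sqrt 6, 0, 0, Real.sqrt (2/3), 0, 0, Real.sqrt 6;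
     0, 0, 0, 0, Real.sqrt 27, 51 / Real.sqrt 27, Real.sqrt 27,
       Real.sqrt 6, Real.sqrt 6, 0, 0, Real.sqrt (2/3), 0, 0;
     Real.sqrt 27, 0, 0, 0, 0, Real.sqrt 27, 51 / Real.sqrt 27,
       0, Real.sqrt 6, Real.sqrt 6, 0, 0, Real.sqrt (2/3), 0;
     51 / Real.sqrt 27, Real.sqrt 27, 0, 0, 0, 0, Real.sqrt 27,
       0, 0, Real.sqrt 6, Real.sqrt 6, 0, 0, Real.sqrt (2/3)]

set_option maxHeartbeats 1000000 in
/-- the explicit circulant matrix `A` factors as `A = B Bᵀ` with the explicit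
entrywise nonnegative 7×14 matrix `B`; in particular `A` is completely positive with
cp-rank at most 14. -/
theorem circulant_factorization :
    (∀ i j, 0 ≤ Bfac i j) ∧ Acirc = Bfac * Bfacᵀ ∧
      ∃ C : Matrix (Fin 7) (Fin 14) ℝ, (∀ i j, 0 ≤ C i j) ∧ Acirc = C * Cᵀ := by
  have hnn : ∀ i j, 0 ≤ Bfac i j := by
    intro i
    fin_cases i <;>
      · simp only [Bfac, Fin.forall_fin_succ, Matrix.cons_val_zero, Matrix.cons_val_zero',
          Matrix.cons_val_succ, Matrix.cons_val_succ', Matrix.of_apply]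
        refine ⟨?_,?_,?_,?_,?_,?_,?_,?_,?_,?_,?_,?_,?_,?_,fun i => i.elim0⟩ <;> positivity
  have hA : Acirc = !![163,108,27,4,4,27,108;
                       108,163,108,27,4,4,27;
                       27,108,163,108,27,4,4;
                       4,27,108,163,108,27,4;
                       4,4,27,108,163,108,27;
                       27,4,4,27,108,163,108;
                       108,27,4,4,27,108,163] := by
    ext i j
    fin_cases i <;> fin_cases j <;> rfl
  have hs : Real.sqrt 27 * Real.sqrt 27 = 27 := Real.mul_self_sqrt (by norm_num)
  have h6 : Real.sqrt 6 * Real.sqrt 6 = 6 := Real.mul_self_sqrt (by norm_num)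
  have hs0 : Real.sqrt 27 ≠ 0 := by positivity
  have hd1 : 51 / Real.sqrt 27 = 17/9 * Real.sqrt 27 := by
    rw [div_eq_iff hs0, mul_assoc, hs]; norm_num
  have hd2 : Real.sqrt (2/3 : ℝ) = Real.sqrt 6 / 3 := by
    rw [show (2/3:ℝ) = 6/9 by norm_num, Real.sqrt_div (by norm_num),
      show (9:ℝ) = 3^2 by norm_num, Real.sqrt_sq (by norm_num)]
  have hmain : Acirc = Bfac * Bfacᵀ := by
    rw [hA]
    ext i j
    fin_cases i <;> fin_cases j <;>
      · simp only [Bfac, hd1, hd2, Matrix.mul_apply, Matrix.transpose_apply,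
          Fin.sum_univ_succ, Fin.sum_univ_zero, Matrix.cons_val_zero, Matrix.cons_val_zero',
          Matrix.cons_val_succ, Matrix.cons_val_succ', Matrix.of_apply,
          mul_zero, zero_mul, add_zero, zero_add]
        nlinarith [hs, h6]
  exact ⟨hnn, hmain, Bfac, hnn, hmain⟩
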